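/- For 0 < ρ < 1 and ε > 0 one has |ℜ(ρ,ε)| ≤ ρ + 4ε + 2√ε; moreover, if in addition ρ + 4√ε < 1, then 4ε < 2√ε and hence |ℜ(ρ,ε)| ≤ ρ + 4ε + 2√ε < ρ + 4√ε < 1. -/
import Mathlib


noncomputable section

/-- The Euclidean norm `|x| = (x₁² + x₂²)^{1/2}` on `ℝ²`. -/
def eucNorm (x : Fin 2 → ℝ) : ℝ :=
  Real.sqrt (x 0 ^ 2 + x 1 ^ 2)

/-- The operator norm `|M| := sup_{x ≠ 0} |Mx|/|x|` of a 2×2 real matrix. -/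
def eucOpNorm (M : Matrix (Fin 2) (Fin 2) ℝ) : ℝ :=
  ⨆ x : {x : Fin 2 → ℝ // x ≠ 0}, eucNorm (M.mulVec (x : Fin 2 → ℝ)) / eucNorm (x : Fin 2 → ℝ)

/-- The matrix `ℜ(ρ,ε)` with rows `(ρ+2ε, 2√(ε(1+ε)))` and `(2√(ε(1+ε)), 2ε)`. -/
def Rmat (ρ ε : ℝ) : Matrix (Fin 2) (Fin 2) ℝ :=
  !![ρ + 2 * ε, 2 * Real.sqrt (ε * (1 + ε));
     2 * Real.sqrt (ε * (1 + ε)), 2 * ε]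

lemma eucNorm_pos {x : Fin 2 → ℝ} (hx : x ≠ 0) : 0 < eucNorm x := by
  unfold eucNorm
  apply Real.sqrt_pos.2
  rcases Function.ne_iff.1 hx with ⟨i, hi⟩
  fin_cases i <;> simp at hi <;> positivity

lemma quad_bound (a b c B x y : ℝ) (ha : 0 ≤ a) (hb : 0 ≤ b) (hc : 0 ≤ c)
    (h1 : a + b ≤ B) (h2 : b + c ≤ B) :
    (a*x + b*y)^2 + (b*x + c*y)^2 ≤ B^2 * (x^2 + y^2) := by
  have hB : 0 ≤ B := le_trans (add_nonneg ha hb) h1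
  nlinarith [mul_nonneg (mul_nonneg ha hb) (sq_nonneg (x - y)),
    mul_nonneg (mul_nonneg hb hc) (sq_nonneg (x - y)),
    mul_nonneg (mul_nonneg hB (sub_nonneg.2 h1)) (sq_nonneg x),
    mul_nonneg (mul_nonneg hB (sub_nonneg.2 h2)) (sq_nonneg y),
    mul_nonneg (mul_nonneg ha (sub_nonneg.2 h1)) (sq_nonneg x),
    mul_nonneg (mul_nonneg hc (sub_nonneg.2 h2)) (sq_nonneg y),
    mul_nonneg (mul_nonneg hb (sub_nonneg.2 h1)) (sq_nonneg y),
    mul_nonneg (mul_nonneg hb (sub_nonneg.2 h2)) (sq_nonneg x)]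

/-- for `0 < ρ < 1` and `ε > 0`, `|ℜ(ρ,ε)| ≤ ρ + 4ε + 2√ε`;
moreover, if `ρ + 4√ε < 1` then `4ε < 2√ε` and
`|ℜ(ρ,ε)| ≤ ρ + 4ε + 2√ε < ρ + 4√ε < 1`. -/
theorem Rmat_opNorm_bound
    (ρ ε : ℝ) (hρ : 0 < ρ) (hρ1 : ρ < 1) (hε : 0 < ε) :
    eucOpNorm (Rmat ρ ε) ≤ ρ + 4 * ε + 2 * Real.sqrt ε ∧
    (ρ + 4 * Real.sqrt ε < 1 →
      4 * ε < 2 * Real.sqrt ε ∧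
      ρ + 4 * ε + 2 * Real.sqrt ε < ρ + 4 * Real.sqrt ε ∧
      eucOpNorm (Rmat ρ ε) < 1) := by

  have hs0 : 0 < Real.sqrt ε := Real.sqrt_pos.2 hε
  set s := Real.sqrt ε with hsdef
  have hs2 : s ^ 2 = ε := Real.sq_sqrt hε.le
  set B := ρ + 4 * ε + 2 * s with hBdef
  have hB0 : 0 < B := by positivity
  have hb : Real.sqrt (ε * (1 + ε)) ≤ s + ε := by
    rw [show s + ε = Real.sqrt ((s + ε)^2) from (Real.sqrt_sq (by positivity)).symm]
    apply Real.sqrt_le_sqrt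
    nlinarith
  have hbnn : 0 ≤ Real.sqrt (ε * (1 + ε)) := Real.sqrt_nonneg _
  haveI : Nonempty {x : Fin 2 → ℝ // x ≠ 0} :=
    ⟨⟨![1, 0], by
      intro h
      have := congrFun h 0
      simp at this⟩⟩
  have key : eucOpNorm (Rmat ρ ε) ≤ B := by
    apply ciSup_le
    rintro ⟨x, hx⟩
    have hxn : 0 < eucNorm x := eucNorm_pos hx
    rw [div_le_iff₀ hxn]
    have hmv : (Rmat ρ ε).mulVec x 0 = (ρ + 2*ε) * x 0 + (2 * Real.sqrt (ε * (1 + ε))) * x 1 ∧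
        (Rmat ρ ε).mulVec x 1 = (2 * Real.sqrt (ε * (1 + ε))) * x 0 + (2*ε) * x 1 := by
      constructor <;>
        simp [Rmat, Matrix.mulVec, dotProduct, Fin.sum_univ_two]
    have hq : ((ρ + 2*ε) * x 0 + (2 * Real.sqrt (ε * (1 + ε))) * x 1)^2 +
        ((2 * Real.sqrt (ε * (1 + ε))) * x 0 + (2*ε) * x 1)^2 ≤ B^2 * (x 0 ^2 + x 1 ^2) := by
      apply quad_bound <;> nlinarith
    calc eucNorm ((Rmat ρ ε).mulVec x)
        = Real.sqrt (((ρ + 2*ε) * x 0 + (2 * Real.sqrt (ε * (1 + ε))) * x 1)^2 +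
            ((2 * Real.sqrt (ε * (1 + ε))) * x 0 + (2*ε) * x 1)^2) := by
          rw [eucNorm, hmv.1, hmv.2]
      _ ≤ Real.sqrt (B^2 * (x 0 ^2 + x 1 ^2)) := Real.sqrt_le_sqrt hq
      _ = B * eucNorm x := by
          rw [eucNorm, Real.sqrt_mul (sq_nonneg B), Real.sqrt_sq hB0.le]
  refine ⟨key, fun h => ?_⟩
  have hslt : 4 * s < 1 := by linarith
  have h4e : 4 * ε < 2 * s := by nlinarith
  exact ⟨h4e, by linarith, lt_of_le_of_lt key (by linarith)⟩
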